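/- Let R ⊆ ℚ^k be a semilinear set and let p ∈ R be such that for every rational A > 0 there exists a rational a ≥ A with a•p ∉ R. Then the set U = {a ∈ ℚ | a•p ∈ R} contains 1 and there exists M ∈ ℚ such that U ∩ (M, ∞) = ∅. -/

import Mathlib

/-- A linear set in ℚ^n: the solution set of a finite conjunction of linear
inequalities `c₁x₁+…+cₙxₙ ≤ b` or `c₁x₁+…+cₙxₙ < b` with rational coefficients. -/
def IsLinearSetQ (n : ℕ) (S : Set (Fin n → ℚ)) : Prop :=
  ∃ (m : ℕ) (c : Fin m → Fin n → ℚ) (b : Fin m → ℚ) (strict : Fin m → Bool),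
    S = {x | ∀ i, if strict i then (∑ j, c i j * x j) < b i else (∑ j, c i j * x j) ≤ b i}

/-- A semilinear set: a finite union of linear sets. -/
def IsSemilinear (n : ℕ) (S : Set (Fin n → ℚ)) : Prop :=
  ∃ (k : ℕ) (f : Fin k → Set (Fin n → ℚ)), (∀ i, IsLinearSetQ n (f i)) ∧ S = ⋃ i, f i

lemma mid_le (a x b d bb : ℚ) (hax : a ≤ x) (hxb : x ≤ b) (ha : a * d ≤ bb)
    (hb : b * d ≤ bb) : x * d ≤ bb := by
  rcases le_or_gt 0 d with hd | hd
  · exact le_trans (mul_le_mul_of_nonneg_right hxb hd) hb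
  · exact le_trans (mul_le_mul_of_nonpos_right hax hd.le) ha

lemma mid_lt (a x b d bb : ℚ) (hax : a ≤ x) (hxb : x ≤ b) (ha : a * d < bb)
    (hb : b * d < bb) : x * d < bb := by
  rcases le_or_gt 0 d with hd | hd
  · exact lt_of_le_of_lt (mul_le_mul_of_nonneg_right hxb hd) hb
  · exact lt_of_le_of_lt (mul_le_mul_of_nonpos_right hax hd.le) ha

/-- Let R ⊆ ℚ^k be semilinear and p ∈ R such that for every rational A > 0
there is a rational a ≥ A with a•p ∉ R.  Then U = {a ∈ ℚ | a•p ∈ R} contains 1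
and U ∩ (M, ∞) = ∅ for some M ∈ ℚ. -/
theorem stmt19 {k : ℕ} (R : Set (Fin k → ℚ)) (hR : IsSemilinear k R)
    (p : Fin k → ℚ) (hp : p ∈ R)
    (h : ∀ A : ℚ, 0 < A → ∃ a : ℚ, A ≤ a ∧ a • p ∉ R) :
    (1 : ℚ) ∈ {a : ℚ | a • p ∈ R} ∧
      ∃ M : ℚ, {a : ℚ | a • p ∈ R} ∩ Set.Ioi M = ∅ := by
  obtain ⟨K, f, hf, hRU⟩ := hR
  refine ⟨by simpa using hp, ?_⟩
  by_contra hM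
  push_neg at hM
  have hM' : ∀ M : ℚ, ∃ a, M < a ∧ a • p ∈ R := by
    intro M
    obtain ⟨a, ha1, ha2⟩ := hM M
    exact ⟨a, ha2, ha1⟩
  have hexi : ∃ i, ∀ M : ℚ, ∃ a, M < a ∧ a • p ∈ f i := by
    by_contra hno
    push_neg at hno
    choose g hg using hno
    obtain ⟨a, haM, haR⟩ := hM' (∑ i, |g i|)
    rw [hRU] at haR
    obtain ⟨i, hi⟩ := Set.mem_iUnion.1 haR
    refine hg i a ?_ hi
    have h1 : |g i| ≤ ∑ j, |g j| :=
      Finset.single_le_sum (f := fun j => |g j|) (fun j _ => abs_nonneg _) (Finset.mem_univ i)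
    have h2 := le_abs_self (g i)
    linarith
  obtain ⟨i, hi⟩ := hexi
  obtain ⟨a0, ha0pos, ha0⟩ := hi 0
  obtain ⟨a, haA, haR⟩ := h a0 ha0pos
  obtain ⟨b, hba, hb⟩ := hi a
  exfalso
  apply haR
  rw [hRU]
  refine Set.mem_iUnion.2 ⟨i, ?_⟩
  obtain ⟨m, c, bb, strict, hS⟩ := hf i
  rw [hS] at ha0 hb ⊢
  simp only [Set.mem_setOf_eq] at ha0 hb ⊢
  intro j
  have key : ∀ x : ℚ, (∑ t, c j t * (x • p) t) = x * ∑ t, c j t * p t := by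
    intro x
    rw [Finset.mul_sum]
    refine Finset.sum_congr rfl fun t _ => ?_
    simp only [Pi.smul_apply, smul_eq_mul]
    ring
  have h0 := ha0 j
  have h1 := hb j
  rw [key] at h0 h1 ⊢
  cases hst : strict j <;> simp only [hst] at h0 h1 ⊢ <;>
    simp only [if_true, if_false, Bool.false_eq_true, ite_true, ite_false] at h0 h1 ⊢
  · exact mid_le a0 a b _ _ haA hba.le h0 h1
  · exact mid_lt a0 a b _ _ haA hba.le h0 h1
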